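/- Define σ : ℝ³ → ℝ/ℤ by σ(θ₁, θ₂, θ₃) := ⌊fract(θ₁) + fract(θ₂)⌋ · θ₃ (mod 1). Then for all θ₁, θ₂, θ₃, θ₄ ∈ ℝ one has the 3-cocycle identity σ(θ₁,θ₂,θ₃) - σ(θ₁,θ₂,θ₃+θ₄) + σ(θ₁,θ₂+θ₃,θ₄) - σ(θ₁+θ₂,θ₃,θ₄) + σ(θ₂,θ₃,θ₄) = 0 in ℝ/ℤ. -/

import Mathlib

/-- `σ(θ₁,θ₂,θ₃) = ⌊{θ₁} + {θ₂}⌋ · θ₃ (mod 1)`. -/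
noncomputable def sigma3 (a b c : ℝ) : AddCircle (1 : ℝ) :=
  (((⌊Int.fract a + Int.fract b⌋ : ℝ) * c : ℝ) : AddCircle (1 : ℝ))

lemma fract_add_eq (b c : ℝ) :
    Int.fract (b + c) = Int.fract b + Int.fract c - ⌊Int.fract b + Int.fract c⌋ := by
  have h : Int.fract (b + c) = Int.fract (Int.fract b + Int.fract c) := by
    conv_lhs => rw [← Int.fract_add_floor b, ← Int.fract_add_floor c]
    rw [show Int.fract b + ↑⌊b⌋ + (Int.fract c + ↑⌊c⌋)
        = Int.fract b + Int.fract c + ((⌊b⌋ + ⌊c⌋ : ℤ) : ℝ) by push_cast; ring,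
      Int.fract_add_intCast]
  rw [h]
  exact (Int.self_sub_floor (Int.fract b + Int.fract c)).symm

/-- The 3-cocycle identity for `σ` in `ℝ/ℤ`. -/
theorem sigma3_cocycle (θ₁ θ₂ θ₃ θ₄ : ℝ) :
    sigma3 θ₁ θ₂ θ₃ - sigma3 θ₁ θ₂ (θ₃ + θ₄) + sigma3 θ₁ (θ₂ + θ₃) θ₄
      - sigma3 (θ₁ + θ₂) θ₃ θ₄ + sigma3 θ₂ θ₃ θ₄ = 0 := by
  unfold sigma3
  have hB : ⌊Int.fract θ₁ + Int.fract (θ₂ + θ₃)⌋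
      = ⌊Int.fract θ₁ + Int.fract θ₂ + Int.fract θ₃⌋ - ⌊Int.fract θ₂ + Int.fract θ₃⌋ := by
    rw [fract_add_eq θ₂ θ₃]
    rw [show Int.fract θ₁ + (Int.fract θ₂ + Int.fract θ₃ - ⌊Int.fract θ₂ + Int.fract θ₃⌋)
        = Int.fract θ₁ + Int.fract θ₂ + Int.fract θ₃ - (⌊Int.fract θ₂ + Int.fract θ₃⌋ : ℤ) by
      ring]
    rw [Int.floor_sub_intCast]
  have hC : ⌊Int.fract (θ₁ + θ₂) + Int.fract θ₃⌋
      = ⌊Int.fract θ₁ + Int.fract θ₂ + Int.fract θ₃⌋ - ⌊Int.fract θ₁ + Int.fract θ₂⌋ := by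
    rw [fract_add_eq θ₁ θ₂]
    rw [show Int.fract θ₁ + Int.fract θ₂ - ⌊Int.fract θ₁ + Int.fract θ₂⌋ + Int.fract θ₃
        = Int.fract θ₁ + Int.fract θ₂ + Int.fract θ₃ - (⌊Int.fract θ₁ + Int.fract θ₂⌋ : ℤ) by
      ring]
    rw [Int.floor_sub_intCast]
  rw [hB, hC]
  rw [← QuotientAddGroup.mk_sub, ← QuotientAddGroup.mk_add, ← QuotientAddGroup.mk_sub,
    ← QuotientAddGroup.mk_add]
  have : ((⌊Int.fract θ₁ + Int.fract θ₂⌋ : ℝ) * θ₃ -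
      (⌊Int.fract θ₁ + Int.fract θ₂⌋ : ℝ) * (θ₃ + θ₄) +
      ((⌊Int.fract θ₁ + Int.fract θ₂ + Int.fract θ₃⌋ - ⌊Int.fract θ₂ + Int.fract θ₃⌋ : ℤ) : ℝ) * θ₄ -
      ((⌊Int.fract θ₁ + Int.fract θ₂ + Int.fract θ₃⌋ - ⌊Int.fract θ₁ + Int.fract θ₂⌋ : ℤ) : ℝ) * θ₄ +
      (⌊Int.fract θ₂ + Int.fract θ₃⌋ : ℝ) * θ₄) = 0 := by push_cast; ring
  rw [this, QuotientAddGroup.mk_zero]
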